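/- Let p be a prime number and let ι : A → B be an injective homomorphism of commutative rings of characteristic p. Let a ∈ A and b ∈ B with b^p = ι(a). Then every polynomial g ∈ A[X] with g(b) = 0 (evaluating coefficients via ι) satisfies g^p ∈ (X^p − a)·A[X]. Consequently, the kernel of the induced ring homomorphism A[X]/(X^p − a) → B sending X to b is a nil ideal (every element of the kernel is nilpotent). -/

import Mathlib

open Polynomial in
/-- Let `p` be prime, `ι : A → B` an injective homomorphism of commutative rings of
characteristic `p`, `a ∈ A` and `b ∈ B` with `b^p = ι a`. Then every `g ∈ A[X]` with `g(b) = 0`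
satisfies `g^p ∈ (X^p − a)`; consequently, the kernel of the induced ring homomorphism
`A[X]/(X^p − a) → B`, `X ↦ b`, is a nil ideal. -/
theorem pow_p_mem_span_and_ker_nil
    (p : ℕ) [Fact p.Prime] (A B : Type*) [CommRing A] [CommRing B] [CharP A p] [CharP B p]
    (ι : A →+* B) (hι : Function.Injective ι) (a : A) (b : B) (hb : b ^ p = ι a) :
    (∀ g : A[X], eval₂ ι b g = 0 → g ^ p ∈ Ideal.span {(X : A[X]) ^ p - C a}) ∧
    (∀ x ∈ RingHom.ker
        (Ideal.Quotient.lift (Ideal.span {(X : A[X]) ^ p - C a}) (eval₂RingHom ι b)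
          (fun g hg => by
            rw [Ideal.mem_span_singleton] at hg
            obtain ⟨q, rfl⟩ := hg
            simp [hb])),
      IsNilpotent x) := by
  have key : ∀ g : A[X], eval₂ ι b g = 0 → g ^ p ∈ Ideal.span {(X : A[X]) ^ p - C a} := by
    intro g hg
    set h : A[X] := g.map (frobenius A p) with hh
    have h1 : expand A p h = g ^ p := by
      rw [hh, ← map_expand, map_frobenius_expand]
    have heval : h.eval a = 0 := by
      apply hι
      rw [map_zero, ← eval₂_at_apply, hh, eval₂_map]
      have hcomp : ι.comp (frobenius A p) = (frobenius B p).comp ι := by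
        ext x; simp [frobenius_def, map_pow]
      rw [hcomp, ← hb]
      have := hom_eval₂ (f := ι) (g := frobenius B p) (p := g) b
      simp only [frobenius_def] at this
      rw [← this, hg]; exact zero_pow (Fact.out : p.Prime).ne_zero
    have h2 : (X : A[X]) ^ p - C a ∣ g ^ p := by
      obtain ⟨q, hq⟩ := X_sub_C_dvd_sub_C_eval (a := a) (p := h)
      refine ⟨q.comp (X ^ p), ?_⟩
      have := congrArg (fun f => f.comp ((X : A[X]) ^ p)) hq
      simp only [sub_comp, X_comp, C_comp, mul_comp] at this
      rw [← expand_eq_comp_X_pow, h1, heval, map_zero, sub_zero] at this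
      exact this
    exact Ideal.mem_span_singleton.mpr h2
  refine ⟨key, fun x hx => ?_⟩
  obtain ⟨g, rfl⟩ := Ideal.Quotient.mk_surjective x
  rw [RingHom.mem_ker, Ideal.Quotient.lift_mk] at hx
  refine ⟨p, ?_⟩
  rw [← map_pow, Ideal.Quotient.eq_zero_iff_mem]
  exact key g hx
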